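/- arXiv:1807.06037 — 3 statements merged into one kernel-verified Lean document; each statement's English description precedes it below -/
import Mathlib

section
/- Given a special deformation retract: chain maps i : W → V, p : V → W and a degree −1 map h : V → V with p∘i = 1_W, i∘p − 1_V = d_V∘h + h∘d_V, h∘i = 0, p∘h = 0, h∘h = 0, and a perturbation δ of d_V (i.e., (d_V + δ)² = 0) such that (1 − δh) is invertible, the perturbed differential d'_W := d_W + p(1 − δh)^{-1}δ i on W satisfies (d'_W)² = 0. -/
/-- Homological Perturbation Lemma, differential part:
Given a special deformation retract `(i, p, h)` between chain complexes `(V, dV)` and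
`(W, dW)` (with `p∘i = 1`, `i∘p - 1 = dV∘h + h∘dV`, `h∘i = 0`, `p∘h = 0`, `h∘h = 0`)
and a perturbation `δ` (i.e. `(dV + δ)² = 0`) with `1 - δ∘h` invertible (with inverse `A`),
the perturbed differential `d'_W = dW + p∘A∘δ∘i` satisfies `(d'_W)² = 0`. -/
theorem stmt_4 (K V W : Type) [Field K]
    [AddCommGroup V] [Module K V] [AddCommGroup W] [Module K W]
    (dV h δ A : V →ₗ[K] V) (dW : W →ₗ[K] W) (i : W →ₗ[K] V) (p : V →ₗ[K] W)
    (hdV : dV ∘ₗ dV = 0) (hdW : dW ∘ₗ dW = 0)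
    (hchain_i : dV ∘ₗ i = i ∘ₗ dW) (hchain_p : dW ∘ₗ p = p ∘ₗ dV)
    (hpi : p ∘ₗ i = LinearMap.id)
    (hip : i ∘ₗ p - LinearMap.id = dV ∘ₗ h + h ∘ₗ dV)
    (hhi : h ∘ₗ i = 0) (hph : p ∘ₗ h = 0) (hhh : h ∘ₗ h = 0)
    (hpert : (dV + δ) ∘ₗ (dV + δ) = 0)
    (hA₁ : A ∘ₗ (LinearMap.id - δ ∘ₗ h) = LinearMap.id)
    (hA₂ : (LinearMap.id - δ ∘ₗ h) ∘ₗ A = LinearMap.id) :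
    (dW + p ∘ₗ A ∘ₗ δ ∘ₗ i) ∘ₗ (dW + p ∘ₗ A ∘ₗ δ ∘ₗ i) = 0 := by
  have mulc : ∀ f g : V →ₗ[K] V, f * g = f ∘ₗ g := fun f g => rfl
  have idc : (1 : V →ₗ[K] V) = LinearMap.id := rfl
  -- Step 1: the key identity on `V`, proved in the endomorphism ring.
  have key : dV*(A*δ) + (A*δ)*dV + (A*δ)*(A*δ) + (A*δ)*((dV*h)*(A*δ))
      + (A*δ)*((h*dV)*(A*δ)) = 0 := by
    have hdV' : dV * dV = 0 := hdV
    have hpert' : (dV + δ) * (dV + δ) = 0 := hpert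
    have hA1' : A * (1 - δ * h) = 1 := by rw [mulc, mulc, idc]; exact hA₁
    have hA2' : (1 - δ * h) * A = 1 := by rw [mulc, mulc, idc]; exact hA₂
    have hE : δ * δ + δ * dV + dV * δ = 0 := by
      calc δ * δ + δ * dV + dV * δ = (dV + δ) * (dV + δ) - dV * dV := by noncomm_ring
      _ = 0 := by rw [hpert', hdV']; simp
    set B : V →ₗ[K] V := 1 + h * (A * δ) with hB
    have hA2'' : δ * h * A = A - 1 := by
      calc δ * h * A = A - (1 - δ * h) * A := by noncomm_ring
      _ = A - 1 := by rw [hA2']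
    have h1 : A * δ = δ * B := by
      rw [hB]
      calc A * δ = δ + (δ * h * A) * δ := by rw [hA2'']; noncomm_ring
      _ = δ * (1 + h * (A * δ)) := by noncomm_ring
    have h2 : (A * δ) * h = A - 1 := by
      calc (A * δ) * h = A - A * (1 - δ * h) := by noncomm_ring
      _ = A - 1 := by rw [hA1']
    have h3 : h * (A * δ) = B - 1 := by rw [hB]; noncomm_ring
    calc dV*(A*δ) + (A*δ)*dV + (A*δ)*(A*δ) + (A*δ)*((dV*h)*(A*δ)) + (A*δ)*((h*dV)*(A*δ))
        = dV*(A*δ) + (A*δ)*dV + (A*δ)*(A*δ) + (A*δ)*dV*(h*(A*δ)) + ((A*δ)*h)*(dV*(A*δ)) := by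
          noncomm_ring
      _ = dV*(A*δ) + (A*δ)*dV + (A*δ)*(A*δ) + (A*δ)*dV*(B-1) + (A-1)*(dV*(A*δ)) := by
          rw [h2, h3]
      _ = (A*δ)*(A*δ) + (A*δ)*(dV*B) + (A*dV)*(A*δ) := by noncomm_ring
      _ = (A*δ)*(δ*B) + (A*δ)*(dV*B) + (A*dV)*(δ*B) := by rw [h1]
      _ = A*((δ*δ + δ*dV + dV*δ)*B) := by noncomm_ring
      _ = 0 := by rw [hE]; simp
  -- Step 2: sandwich the key identity between `p` and `i` and assemble.
  have key2 : p ∘ₗ ((dV*(A*δ) + (A*δ)*dV + (A*δ)*(A*δ) + (A*δ)*((dV*h)*(A*δ))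
      + (A*δ)*((h*dV)*(A*δ))) ∘ₗ i) = 0 := by
    rw [key]; simp
  have hcp : ∀ (f : W →ₗ[K] V), dW ∘ₗ (p ∘ₗ f) = p ∘ₗ (dV ∘ₗ f) := fun f => by
    rw [← LinearMap.comp_assoc, hchain_p, LinearMap.comp_assoc]
  have hipc : i ∘ₗ p = LinearMap.id + (dV ∘ₗ h + h ∘ₗ dV) := by rw [← hip]; abel
  have hipf : ∀ (f : W →ₗ[K] V), i ∘ₗ (p ∘ₗ f) = f + (dV ∘ₗ (h ∘ₗ f) + h ∘ₗ (dV ∘ₗ f)) :=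
    fun f => by
      rw [← LinearMap.comp_assoc, hipc]
      simp only [LinearMap.add_comp, LinearMap.id_comp, LinearMap.comp_assoc]
  simp only [mulc, LinearMap.add_comp, LinearMap.comp_add, LinearMap.comp_assoc] at key2 ⊢
  rw [hdW, ← hchain_i, hcp, hipf]
  simp only [LinearMap.comp_add, LinearMap.comp_assoc]
  abel_nf at key2 ⊢
  exact key2
end

section
/- Under the hypotheses of the homological perturbation lemma for a special deformation retract, the perturbed maps p' = p + p(1 − δh)^{-1}δh, i' = i + h(1 − δh)^{-1}δ i, h' = h + h(1 − δh)^{-1}δh, and d'_W = d_W + p(1 − δh)^{-1}δ i satisfy: p' is a chain map from (V, d_V+δ) to (W, d'_W), i' is a chain map in the other direction, p'∘i' = 1_W, and i'∘p' − 1_V = (d_V+δ)∘h' + h'∘(d_V+δ). -/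
section helpers

variable {K : Type} [Field K]

/-- Generic: lift a 2-letter composition identity under a trailing composition. -/
theorem gen2 {A B C U : Type} [AddCommGroup A] [Module K A] [AddCommGroup B] [Module K B]
    [AddCommGroup C] [Module K C] [AddCommGroup U] [Module K U]
    {f : B →ₗ[K] C} {g : A →ₗ[K] B} {r : A →ₗ[K] C} (hfg : f ∘ₗ g = r) (x : U →ₗ[K] A) :
    f ∘ₗ (g ∘ₗ x) = r ∘ₗ x := by
  rw [← LinearMap.comp_assoc, hfg]

/-- Generic: lift a 3-letter composition identity under a trailing composition. -/
theorem gen3 {A B C D U : Type} [AddCommGroup A] [Module K A] [AddCommGroup B] [Module K B]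
    [AddCommGroup C] [Module K C] [AddCommGroup D] [Module K D] [AddCommGroup U] [Module K U]
    {f : C →ₗ[K] D} {g : B →ₗ[K] C} {k : A →ₗ[K] B} {r : A →ₗ[K] D}
    (hfg : f ∘ₗ (g ∘ₗ k) = r) (x : U →ₗ[K] A) :
    f ∘ₗ (g ∘ₗ (k ∘ₗ x)) = r ∘ₗ x := by
  rw [← LinearMap.comp_assoc x k g, ← LinearMap.comp_assoc x (g ∘ₗ k) f, hfg]

end helpers

/-- Homological Perturbation Lemma, full form: under the hypotheses of
the perturbation lemma for an SDR, the perturbed maps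
`p' = p + p(1-δh)⁻¹δh`, `i' = i + h(1-δh)⁻¹δi`, `h' = h + h(1-δh)⁻¹δh`,
`d'_W = dW + p(1-δh)⁻¹δi` satisfy: `p'` is a chain map `(V, dV+δ) → (W, d'_W)`,
`i'` is a chain map in the other direction, `p'∘i' = 1_W`, and
`i'∘p' - 1_V = (dV+δ)∘h' + h'∘(dV+δ)`. -/
theorem stmt_5 (K V W : Type) [Field K]
    [AddCommGroup V] [Module K V] [AddCommGroup W] [Module K W]
    (dV h δ A : V →ₗ[K] V) (dW : W →ₗ[K] W) (i : W →ₗ[K] V) (p : V →ₗ[K] W)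
    (hdV : dV ∘ₗ dV = 0) (hdW : dW ∘ₗ dW = 0)
    (hchain_i : dV ∘ₗ i = i ∘ₗ dW) (hchain_p : dW ∘ₗ p = p ∘ₗ dV)
    (hpi : p ∘ₗ i = LinearMap.id)
    (hip : i ∘ₗ p - LinearMap.id = dV ∘ₗ h + h ∘ₗ dV)
    (hhi : h ∘ₗ i = 0) (hph : p ∘ₗ h = 0) (hhh : h ∘ₗ h = 0)
    (hpert : (dV + δ) ∘ₗ (dV + δ) = 0)
    (hA₁ : A ∘ₗ (LinearMap.id - δ ∘ₗ h) = LinearMap.id)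
    (hA₂ : (LinearMap.id - δ ∘ₗ h) ∘ₗ A = LinearMap.id)
    (p' : V →ₗ[K] W) (i' : W →ₗ[K] V) (h' : V →ₗ[K] V) (dW' : W →ₗ[K] W)
    (hp' : p' = p + p ∘ₗ A ∘ₗ δ ∘ₗ h)
    (hi' : i' = i + h ∘ₗ A ∘ₗ δ ∘ₗ i)
    (hh' : h' = h + h ∘ₗ A ∘ₗ δ ∘ₗ h)
    (hdW' : dW' = dW + p ∘ₗ A ∘ₗ δ ∘ₗ i) :
    p' ∘ₗ (dV + δ) = dW' ∘ₗ p' ∧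
    (dV + δ) ∘ₗ i' = i' ∘ₗ dW' ∧
    p' ∘ₗ i' = LinearMap.id ∧
    i' ∘ₗ p' - LinearMap.id = (dV + δ) ∘ₗ h' + h' ∘ₗ (dV + δ) := by
  -- base identities in right-associated form
  have b1 : A ∘ₗ (δ ∘ₗ h) = A - LinearMap.id := by
    have := hA₁
    rw [LinearMap.comp_sub, LinearMap.comp_id] at this
    linear_combination (norm := module) -this
  have b2 : δ ∘ₗ (h ∘ₗ A) = A - LinearMap.id := by
    have := hA₂
    rw [LinearMap.sub_comp, LinearMap.id_comp, LinearMap.comp_assoc] at this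
    linear_combination (norm := module) -this
  have b7 : i ∘ₗ p = LinearMap.id + (dV ∘ₗ h + h ∘ₗ dV) := by
    linear_combination (norm := module) hip
  have b12 : δ ∘ₗ dV = -(dV ∘ₗ δ) - δ ∘ₗ δ := by
    have := hpert
    rw [LinearMap.add_comp, LinearMap.comp_add, LinearMap.comp_add, hdV] at this
    linear_combination (norm := module) this
  have b13 : δ ∘ₗ (i ∘ₗ dW) = -(dV ∘ₗ (δ ∘ₗ i)) - δ ∘ₗ (δ ∘ₗ i) := by
    rw [← hchain_i, ← LinearMap.comp_assoc, b12, LinearMap.sub_comp, LinearMap.neg_comp,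
      LinearMap.comp_assoc, LinearMap.comp_assoc]
  have b14 : A ∘ₗ i = i := by
    have : A ∘ₗ i = (A ∘ₗ (δ ∘ₗ h)) ∘ₗ i + i := by
      rw [b1]; rw [LinearMap.sub_comp, LinearMap.id_comp]; abel
    rw [LinearMap.comp_assoc, LinearMap.comp_assoc, hhi, LinearMap.comp_zero,
      LinearMap.comp_zero, zero_add] at this
    exact this
  have b15 : A ∘ₗ h = h := by
    have : A ∘ₗ h = (A ∘ₗ (δ ∘ₗ h)) ∘ₗ h + h := by
      rw [b1]; rw [LinearMap.sub_comp, LinearMap.id_comp]; abel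
    rw [LinearMap.comp_assoc, LinearMap.comp_assoc, hhh, LinearMap.comp_zero,
      LinearMap.comp_zero, zero_add] at this
    exact this
  subst hp' hi' hh' hdW'
  refine ⟨?_, ?_, ?_, ?_⟩ <;>
  · simp only [LinearMap.comp_assoc, LinearMap.add_comp, LinearMap.comp_add,
      LinearMap.sub_comp, LinearMap.comp_sub, LinearMap.neg_comp, LinearMap.comp_neg,
      LinearMap.zero_comp, LinearMap.comp_zero, LinearMap.id_comp, LinearMap.comp_id,
      b1, gen3 b1, b2, gen3 b2, hhh, gen2 hhh, hph, gen2 hph, hhi, gen2 hhi,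
      hpi, gen2 hpi, b7, gen2 b7, hdV, gen2 hdV, hdW, gen2 hdW,
      hchain_i, gen2 hchain_i, hchain_p, gen2 hchain_p,
      b12, gen2 b12, b13, gen3 b13, b14, gen2 b14, b15, gen2 b15]
    abel
end

section
/- Let (h, i, p) be a special deformation retract between chain complexes (V, d_V) and (W, d_W). Define on the n-fold tensor powers the maps T^n i = i^{⊗n}, T^n p = p^{⊗n}, T^n d = Σ_{j=0}^{n-1} 1^{⊗j} ⊗ d_V ⊗ 1^{⊗(n-1-j)}, and T^n h = Σ_{j=0}^{n-1} 1^{⊗j} ⊗ h ⊗ (i∘p)^{⊗(n-1-j)}. Then T^n d ∘ T^n h + T^n h ∘ T^n d = (i∘p)^{⊗n} − 1^{⊗n}. -/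
open scoped TensorProduct

section Aux

variable {K V : Type} [Field K] [AddCommGroup V] [Module K V] {n : ℕ}

private lemma aux_neg_one_smul
    (f : (⨂[K] (_ : Fin n), V) →ₗ[K] ⨂[K] (_ : Fin n), V) :
    (-1 : K) • f = -f := by
  ext x
  simp [neg_smul]

private lemma aux_map_neg (f g : Fin n → V →ₗ[K] V) (j : Fin n)
    (hj : f j = - g j) (hne : ∀ t, t ≠ j → f t = g t) :
    PiTensorProduct.map (s := fun _ : Fin n => V) (t := fun _ : Fin n => V) f
      = - PiTensorProduct.map g := by
  classical
  have hf : f = Function.update g j (-(g j)) := by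
    funext t
    by_cases ht : t = j
    · subst ht; simp [hj]
    · simp [Function.update_of_ne ht, hne t ht]
  have h2 : -(g j) = (-1 : K) • g j := by simp
  rw [hf, h2, PiTensorProduct.map_update_smul, Function.update_eq_self, aux_neg_one_smul]

private lemma aux_sum_comp {ι : Type} (s : Finset ι)
    (f : ι → (V →ₗ[K] V)) (g : V →ₗ[K] V) :
    (∑ j ∈ s, f j) ∘ₗ g = ∑ j ∈ s, f j ∘ₗ g := by
  ext x; simp [LinearMap.sum_apply]

private lemma aux_comp_sum {ι : Type} (s : Finset ι)
    (f : ι → (V →ₗ[K] V)) (g : V →ₗ[K] V) :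
    g ∘ₗ (∑ j ∈ s, f j) = ∑ j ∈ s, g ∘ₗ f j := by
  ext x; simp [LinearMap.sum_apply]

end Aux

set_option maxHeartbeats 1000000 in
/-- tensor trick, homotopy identity: given an SDR `(i, p, h)` between
`(V, dV)` and `(W, dW)`, with the Koszul sign rule encoded via the parity operator `σ`
(so the graded map `1^{⊗j} ⊗ d ⊗ 1^{⊗(n-1-j)}` is `σ^{⊗j} ⊗ d ⊗ 1^{⊗(n-1-j)}` since
`d`, `h` are odd), the tensor-power maps
`Tⁿd = Σⱼ σ^{⊗j} ⊗ dV ⊗ 1^{⊗(n-1-j)}` and `Tⁿh = Σⱼ σ^{⊗j} ⊗ h ⊗ (i∘p)^{⊗(n-1-j)}`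
satisfy `Tⁿd ∘ Tⁿh + Tⁿh ∘ Tⁿd = (i∘p)^{⊗n} - 1`. -/
theorem stmt_6 (K V W : Type) [Field K]
    [AddCommGroup V] [Module K V] [AddCommGroup W] [Module K W]
    (n : ℕ) (dV σ h : V →ₗ[K] V) (dW : W →ₗ[K] W) (i : W →ₗ[K] V) (p : V →ₗ[K] W)
    (hdV : dV ∘ₗ dV = 0) (hdW : dW ∘ₗ dW = 0)
    (hchain_i : dV ∘ₗ i = i ∘ₗ dW) (hchain_p : dW ∘ₗ p = p ∘ₗ dV)
    (hpi : p ∘ₗ i = LinearMap.id)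
    (hip : i ∘ₗ p - LinearMap.id = dV ∘ₗ h + h ∘ₗ dV)
    (hhi : h ∘ₗ i = 0) (hph : p ∘ₗ h = 0) (hhh : h ∘ₗ h = 0)
    (hσσ : σ ∘ₗ σ = LinearMap.id)
    (hσd : σ ∘ₗ dV = -(dV ∘ₗ σ)) (hσh : σ ∘ₗ h = -(h ∘ₗ σ)) :
    (∑ j : Fin n, PiTensorProduct.map
        (fun t : Fin n => if t < j then σ else if t = j then dV else LinearMap.id)) ∘ₗ
      (∑ j : Fin n, PiTensorProduct.map
        (fun t : Fin n => if t < j then σ else if t = j then h else i ∘ₗ p)) +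
    (∑ j : Fin n, PiTensorProduct.map
        (fun t : Fin n => if t < j then σ else if t = j then h else i ∘ₗ p)) ∘ₗ
      (∑ j : Fin n, PiTensorProduct.map
        (fun t : Fin n => if t < j then σ else if t = j then dV else LinearMap.id)) =
    PiTensorProduct.map (fun _ : Fin n => i ∘ₗ p) -
      (LinearMap.id : (⨂[K] (_ : Fin n), V) →ₗ[K] ⨂[K] (_ : Fin n), V) := by
  classical
  set ip : V →ₗ[K] V := i ∘ₗ p with hipdef
  -- derived algebraic identities
  have hipe : ip = (dV ∘ₗ h + h ∘ₗ dV) + LinearMap.id := by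
    rw [← hip]; abel
  have hdip : dV ∘ₗ ip = ip ∘ₗ dV := by
    rw [hipdef, ← LinearMap.comp_assoc, hchain_i, LinearMap.comp_assoc, hchain_p,
      ← LinearMap.comp_assoc]
  have hσdh : σ ∘ₗ (dV ∘ₗ h) = (dV ∘ₗ h) ∘ₗ σ := by
    rw [← LinearMap.comp_assoc, hσd, LinearMap.neg_comp, LinearMap.comp_assoc, hσh,
      LinearMap.comp_neg, neg_neg, LinearMap.comp_assoc]
  have hσhd : σ ∘ₗ (h ∘ₗ dV) = (h ∘ₗ dV) ∘ₗ σ := by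
    rw [← LinearMap.comp_assoc, hσh, LinearMap.neg_comp, LinearMap.comp_assoc, hσd,
      LinearMap.comp_neg, neg_neg, LinearMap.comp_assoc]
  have hσip : σ ∘ₗ ip = ip ∘ₗ σ := by
    rw [hipe, LinearMap.comp_add, LinearMap.add_comp, LinearMap.comp_add, LinearMap.add_comp,
      hσdh, hσhd, LinearMap.comp_id, LinearMap.id_comp]
  -- the families
  set Df : Fin n → Fin n → (V →ₗ[K] V) :=
    fun j t => if t < j then σ else if t = j then dV else LinearMap.id with hDf
  set Hf : Fin n → Fin n → (V →ₗ[K] V) :=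
    fun j t => if t < j then σ else if t = j then h else ip with hHf
  set D : Fin n → ((⨂[K] (_ : Fin n), V) →ₗ[K] ⨂[K] (_ : Fin n), V) :=
    fun j => PiTensorProduct.map (Df j) with hD
  set H : Fin n → ((⨂[K] (_ : Fin n), V) →ₗ[K] ⨂[K] (_ : Fin n), V) :=
    fun j => PiTensorProduct.map (Hf j) with hH
  -- the telescoping maps
  set B : ℕ → ((⨂[K] (_ : Fin n), V) →ₗ[K] ⨂[K] (_ : Fin n), V) :=
    fun m => PiTensorProduct.map (fun t : Fin n => if (t : ℕ) < m then LinearMap.id else ip)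
    with hB
  -- cross terms cancel
  have cross : ∀ j k : Fin n, j ≠ k → D j ∘ₗ H k + H k ∘ₗ D j = 0 := by
    intro j k hjk
    have hDH : D j ∘ₗ H k = PiTensorProduct.map (fun t => Df j t ∘ₗ Hf k t) :=
      (PiTensorProduct.map_comp (Df j) (Hf k)).symm
    have hHD : H k ∘ₗ D j = PiTensorProduct.map (fun t => Hf k t ∘ₗ Df j t) :=
      (PiTensorProduct.map_comp (Hf k) (Df j)).symm
    rcases lt_or_gt_of_ne hjk with hlt | hgt
    · -- j < k : sign in slot j
      have key : PiTensorProduct.map (s := fun _ : Fin n => V) (t := fun _ : Fin n => V)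
          (fun t => Hf k t ∘ₗ Df j t) = - PiTensorProduct.map (fun t => Df j t ∘ₗ Hf k t) := by
        apply aux_map_neg _ _ j
        · simp only [hDf, hHf, lt_irrefl, if_neg, if_pos, if_true, ite_true, hlt]
          simp [hσd]
        · intro t ht
          rcases lt_trichotomy t j with h1 | h1 | h1
          · have h2 : t < k := lt_trans h1 hlt
            simp [hDf, hHf, h1, h2]
          · exact absurd h1 ht
          · have h3 : ¬ t < j := not_lt_of_gt h1
            have h4 : t ≠ j := ne_of_gt h1
            rcases lt_trichotomy t k with h5 | h5 | h5
            · simp [hDf, hHf, h3, h4, h5]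
            · subst h5
              simp [hDf, hHf, h3, h4, lt_irrefl, not_lt_of_gt hlt, (ne_of_gt hlt : t ≠ j)]
            · have h6 : ¬ t < k := not_lt_of_gt h5
              have h7 : t ≠ k := ne_of_gt h5
              simp [hDf, hHf, h3, h4, h6, h7]
      rw [hDH, hHD, key]; abel
    · -- k < j : sign in slot k
      have key : PiTensorProduct.map (s := fun _ : Fin n => V) (t := fun _ : Fin n => V)
          (fun t => Df j t ∘ₗ Hf k t) = - PiTensorProduct.map (fun t => Hf k t ∘ₗ Df j t) := by
        apply aux_map_neg _ _ k
        · simp only [hDf, hHf, lt_irrefl, hgt]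
          simp [hσh, hgt]
        · intro t ht
          rcases lt_trichotomy t k with h1 | h1 | h1
          · have h2 : t < j := lt_trans h1 hgt
            simp [hDf, hHf, h1, h2]
          · exact absurd h1 ht
          · have h3 : ¬ t < k := not_lt_of_gt h1
            have h4 : t ≠ k := ne_of_gt h1
            rcases lt_trichotomy t j with h5 | h5 | h5
            · simp [hDf, hHf, h3, h4, h5, hσip]
            · subst h5
              simp [hDf, hHf, h3, h4, lt_irrefl, not_lt_of_gt hgt, (ne_of_gt hgt : t ≠ k), hdip]
            · have h6 : ¬ t < j := not_lt_of_gt h5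
              have h7 : t ≠ j := ne_of_gt h5
              simp [hDf, hHf, h3, h4, h6, h7]
      rw [hDH, hHD, key]; abel
  -- diagonal terms telescope
  have diag : ∀ j : Fin n, D j ∘ₗ H j + H j ∘ₗ D j = B j - B ((j : ℕ) + 1) := by
    intro j
    set base : Fin n → (V →ₗ[K] V) :=
      fun t => if (t : ℕ) < (j : ℕ) then LinearMap.id else ip with hbase
    have hDH : D j ∘ₗ H j = PiTensorProduct.map (Function.update base j (dV ∘ₗ h)) := by
      rw [hD, hH, ← PiTensorProduct.map_comp]
      congr 1
      funext t
      rcases lt_trichotomy t j with h1 | h1 | h1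
      · have h1' : (t : ℕ) < (j : ℕ) := h1
        simp [hDf, hHf, hbase, Function.update_of_ne (ne_of_lt h1), h1, h1', hσσ]
      · subst h1; simp [hDf, hHf]
      · have h3 : ¬ t < j := not_lt_of_gt h1
        have h4 : t ≠ j := ne_of_gt h1
        have h1' : ¬ (t : ℕ) < (j : ℕ) := fun hc => h3 hc
        simp [hDf, hHf, hbase, Function.update_of_ne h4, h3, h4, h1']
    have hHD : H j ∘ₗ D j = PiTensorProduct.map (Function.update base j (h ∘ₗ dV)) := by
      rw [hD, hH, ← PiTensorProduct.map_comp]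
      congr 1
      funext t
      rcases lt_trichotomy t j with h1 | h1 | h1
      · have h1' : (t : ℕ) < (j : ℕ) := h1
        simp [hDf, hHf, hbase, Function.update_of_ne (ne_of_lt h1), h1, h1', hσσ]
      · subst h1; simp [hDf, hHf]
      · have h3 : ¬ t < j := not_lt_of_gt h1
        have h4 : t ≠ j := ne_of_gt h1
        have h1' : ¬ (t : ℕ) < (j : ℕ) := fun hc => h3 hc
        simp [hDf, hHf, hbase, Function.update_of_ne h4, h3, h4, h1']
    have hBj : PiTensorProduct.map (Function.update base j ip) = B (j : ℕ) := by
      rw [hB]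
      congr 1
      funext t
      by_cases ht : t = j
      · subst ht; simp [hbase]
      · rw [Function.update_of_ne ht]
    have hBj1 : PiTensorProduct.map (Function.update base j LinearMap.id) = B ((j : ℕ) + 1) := by
      rw [hB]
      congr 1
      funext t
      by_cases ht : t = j
      · subst ht; simp [hbase]
      · rw [Function.update_of_ne ht]
        have heq : ((t : ℕ) < (j : ℕ) + 1) ↔ ((t : ℕ) < (j : ℕ)) := by
          constructor
          · intro hc
            rcases Nat.lt_succ_iff_lt_or_eq.mp hc with hlt | heq'
            · exact hlt
            · exact absurd (Fin.ext heq') ht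
          · exact fun hc => Nat.lt_succ_of_lt hc
        simp only [hbase, heq]
    have hsum : dV ∘ₗ h + h ∘ₗ dV = ip + (-1 : K) • LinearMap.id := by
      have hneg : ((-1 : K) • (LinearMap.id : V →ₗ[K] V)) = -LinearMap.id := by
        ext x; simp
      rw [hipe, hneg]
      abel
    calc D j ∘ₗ H j + H j ∘ₗ D j
        = PiTensorProduct.map (Function.update base j (dV ∘ₗ h))
          + PiTensorProduct.map (Function.update base j (h ∘ₗ dV)) := by rw [hDH, hHD]
      _ = PiTensorProduct.map (Function.update base j (dV ∘ₗ h + h ∘ₗ dV)) :=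
          (PiTensorProduct.map_update_add base j _ _).symm
      _ = PiTensorProduct.map (Function.update base j ip)
          + PiTensorProduct.map (Function.update base j ((-1 : K) • LinearMap.id)) := by
          rw [hsum, PiTensorProduct.map_update_add]
      _ = B (j : ℕ) - B ((j : ℕ) + 1) := by
          rw [PiTensorProduct.map_update_smul, hBj, hBj1, aux_neg_one_smul]
          abel
  -- put it together
  have lhs_eq : (∑ j : Fin n, D j) ∘ₗ (∑ j : Fin n, H j)
      + (∑ j : Fin n, H j) ∘ₗ (∑ j : Fin n, D j)
      = ∑ j : Fin n, (B (j : ℕ) - B ((j : ℕ) + 1)) := by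
    rw [aux_sum_comp, aux_sum_comp]
    simp_rw [aux_comp_sum]
    have swap : ∑ j : Fin n, ∑ k : Fin n, H j ∘ₗ D k
        = ∑ j : Fin n, ∑ k : Fin n, H k ∘ₗ D j := Finset.sum_comm
    rw [swap, ← Finset.sum_add_distrib]
    apply Finset.sum_congr rfl
    intro j _
    rw [← Finset.sum_add_distrib,
      Finset.sum_eq_single_of_mem j (Finset.mem_univ j)]
    · exact diag j
    · intro k _ hk
      exact cross j k (Ne.symm hk)
  have tel : ∑ j : Fin n, (B (j : ℕ) - B ((j : ℕ) + 1)) = B 0 - B n := by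
    rw [Fin.sum_univ_eq_sum_range (fun m => B m - B (m + 1)) n]
    exact Finset.sum_range_sub' (fun m => B m) n
  have hB0 : B 0 = PiTensorProduct.map (fun _ : Fin n => ip) := by
    have he : (fun t : Fin n => if (t : ℕ) < 0 then LinearMap.id else ip)
        = fun _ : Fin n => ip := by
      funext t; simp
    calc B 0 = PiTensorProduct.map
          (fun t : Fin n => if (t : ℕ) < 0 then LinearMap.id else ip) := rfl
      _ = _ := congrArg _ he
  have hBn : B n = LinearMap.id := by
    have he : (fun t : Fin n => if (t : ℕ) < n then LinearMap.id else ip)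
        = fun _ : Fin n => (LinearMap.id : V →ₗ[K] V) := by
      funext t; simp [t.isLt]
    calc B n = PiTensorProduct.map
          (fun t : Fin n => if (t : ℕ) < n then LinearMap.id else ip) := rfl
      _ = PiTensorProduct.map (fun _ : Fin n => (LinearMap.id : V →ₗ[K] V)) := congrArg _ he
      _ = LinearMap.id := PiTensorProduct.map_id
  have e1 : (∑ j : Fin n, PiTensorProduct.map
      (fun t : Fin n => if t < j then σ else if t = j then dV else LinearMap.id))
      = ∑ j : Fin n, D j :=
    Finset.sum_congr rfl (fun j _ => rfl)
  have e2 : (∑ j : Fin n, PiTensorProduct.map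
      (fun t : Fin n => if t < j then σ else if t = j then h else ip))
      = ∑ j : Fin n, H j :=
    Finset.sum_congr rfl (fun j _ => rfl)
  rw [e1, e2, lhs_eq, tel, hB0, hBn]
end
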